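/- Let a₁, a₂, a₃, ω₁, ω₂, ω₃ be arbitrary real numbers. Let T_{abc} (a,b,c ∈ Fin 4, all indices lowered) be the tensor antisymmetric in its last two indices whose only nonvanishing components, up to that antisymmetry, are T_{0,0,i} = a_i for i = 1,2,3, T_{1,0,2} = −T_{2,0,1} = −ω₃, T_{1,0,3} = −T_{3,0,1} = ω₂, and T_{2,0,3} = −T_{3,0,2} = −ω₁. Then: (i) the torsion scalar vanishes, T := Σ^{abc}T_{abc} = 0; (ii) for all indices a, d one has 4·Σ_{b,c} Σ^{bca} T_{bc}{}^{d} − η^{ad}·T = 0 (the gravitational energy-momentum density of the proper reference frame of an arbitrarily accelerated and rotating observer in Minkowski spacetime vanishes); and (iii) Σ^{a0b} = Σ^{b0a} for all a, b, where the middle index 0 is raised with η (the angular-momentum density vanishes). -/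
import Mathlib

/-! Statement 0: The proper-reference-frame torsion in Minkowski spacetime has
vanishing torsion scalar, vanishing gravitational energy-momentum density, and
vanishing angular-momentum density. -/

namespace Stmt0

noncomputable section

/-- Minkowski metric diag(1,-1,-1,-1) on `Fin 4` (it equals its own inverse). -/
def η : Fin 4 → Fin 4 → ℝ := fun a b => if a = b then (if a = 0 then 1 else -1) else 0

/-- Torsion trace `T_a := Σ_b η^{bb} T_{bba}`. -/
def trace (T : Fin 4 → Fin 4 → Fin 4 → ℝ) : Fin 4 → ℝ := fun a => ∑ b, η b b * T b b a

/-- Torsion trace with raised index `T^a := Σ_d η^{ad} T_d`. -/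
def traceU (T : Fin 4 → Fin 4 → Fin 4 → ℝ) : Fin 4 → ℝ := fun a => ∑ d, η a d * trace T d

/-- Fully raised torsion `T^{abc}`. -/
def TU (T : Fin 4 → Fin 4 → Fin 4 → ℝ) : Fin 4 → Fin 4 → Fin 4 → ℝ := fun a b c =>
  ∑ d, ∑ e, ∑ f, η a d * η b e * η c f * T d e f

/-- Superpotential `Σ^{abc} := ¼(T^{abc} + T^{bac} − T^{cab}) + ½(η^{ac}T^b − η^{ab}T^c)`. -/
def Sup (T : Fin 4 → Fin 4 → Fin 4 → ℝ) : Fin 4 → Fin 4 → Fin 4 → ℝ := fun a b c =>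
  (1/4) * (TU T a b c + TU T b a c - TU T c a b)
    + (1/2) * (η a c * traceU T b - η a b * traceU T c)

/-- Torsion scalar `T := Σ^{abc} T_{abc}`. -/
def torsionScalar (T : Fin 4 → Fin 4 → Fin 4 → ℝ) : ℝ :=
  ∑ a, ∑ b, ∑ c, Sup T a b c * T a b c

/-- The matrix `M a c` such that the proper-reference-frame torsion is
`T_{abc} = M a c δ⁰_b − M a b δ⁰_c`: its rows are `(0, a₁, a₂, a₃)`,
`(0, 0, −ω₃, ω₂)`, `(0, ω₃, 0, −ω₁)`, `(0, −ω₂, ω₁, 0)`. -/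
def M (a₁ a₂ a₃ ω₁ ω₂ ω₃ : ℝ) : Fin 4 → Fin 4 → ℝ :=
  ![![0, a₁, a₂, a₃], ![0, 0, -ω₃, ω₂], ![0, ω₃, 0, -ω₁], ![0, -ω₂, ω₁, 0]]

/-- The torsion tensor (all indices lowered), antisymmetric in its last two
indices, whose only nonvanishing components up to that antisymmetry are
`T_{0,0,i} = aᵢ`, `T_{1,0,2} = −T_{2,0,1} = −ω₃`, `T_{1,0,3} = −T_{3,0,1} = ω₂`,
`T_{2,0,3} = −T_{3,0,2} = −ω₁`. -/
def Tprf (a₁ a₂ a₃ ω₁ ω₂ ω₃ : ℝ) : Fin 4 → Fin 4 → Fin 4 → ℝ := fun a b c =>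
  M a₁ a₂ a₃ ω₁ ω₂ ω₃ a c * (if b = (0 : Fin 4) then 1 else 0)
    - M a₁ a₂ a₃ ω₁ ω₂ ω₃ a b * (if c = (0 : Fin 4) then 1 else 0)

lemma diag_sum (a : Fin 4) (f : Fin 4 → ℝ) : ∑ d, η a d * f d = η a a * f a := by
  fin_cases a <;> simp [η, Fin.sum_univ_four]

lemma TU_eq (T : Fin 4 → Fin 4 → Fin 4 → ℝ) (a b c : Fin 4) :
    TU T a b c = η a a * η b b * η c c * T a b c := by
  simp only [TU]
  have h1 : ∀ d e : Fin 4, ∑ f, η a d * η b e * η c f * T d e f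
      = η a d * η b e * (η c c * T d e c) := by
    intro d e; rw [← diag_sum c (fun f => T d e f), Finset.mul_sum]
    exact Finset.sum_congr rfl fun f _ => by ring
  simp only [h1]
  have h2 : ∀ d : Fin 4, ∑ e, η a d * η b e * (η c c * T d e c)
      = η a d * (η b b * (η c c * T d b c)) := by
    intro d; rw [← diag_sum b (fun e => η c c * T d e c), Finset.mul_sum]
    exact Finset.sum_congr rfl fun e _ => by ring
  simp only [h2]
  rw [diag_sum a (fun d => η b b * (η c c * T d b c))]; ring

lemma trace_eq (a₁ a₂ a₃ ω₁ ω₂ ω₃ : ℝ) (a : Fin 4) :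
    trace (Tprf a₁ a₂ a₃ ω₁ ω₂ ω₃) a = M a₁ a₂ a₃ ω₁ ω₂ ω₃ 0 a := by
  fin_cases a <;> simp [trace, Tprf, η, M, Fin.sum_univ_four]

lemma traceU_eq (a₁ a₂ a₃ ω₁ ω₂ ω₃ : ℝ) (a : Fin 4) :
    traceU (Tprf a₁ a₂ a₃ ω₁ ω₂ ω₃) a = η a a * M a₁ a₂ a₃ ω₁ ω₂ ω₃ 0 a := by
  rw [traceU, diag_sum, trace_eq]

set_option maxHeartbeats 0 in
lemma scalar_zero (a₁ a₂ a₃ ω₁ ω₂ ω₃ : ℝ) :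
    torsionScalar (Tprf a₁ a₂ a₃ ω₁ ω₂ ω₃) = 0 := by
  simp [torsionScalar, Sup, TU_eq, traceU_eq, Tprf, η, M, Fin.sum_univ_four]
  ring

set_option maxHeartbeats 0 in
lemma em_zero (a₁ a₂ a₃ ω₁ ω₂ ω₃ : ℝ) (a d : Fin 4) :
    (∑ b, ∑ c, Sup (Tprf a₁ a₂ a₃ ω₁ ω₂ ω₃) b c a *
        (∑ e, η d e * Tprf a₁ a₂ a₃ ω₁ ω₂ ω₃ b c e)) = 0 := by
  simp only [diag_sum]
  fin_cases a <;> fin_cases d <;>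
    · simp [Sup, TU_eq, traceU_eq, Tprf, η, M, Fin.sum_univ_four] <;>
        (first | ring1 | (left; ring1) | (right; ring1) | tauto)

set_option maxHeartbeats 0 in
lemma sup_symm (a₁ a₂ a₃ ω₁ ω₂ ω₃ : ℝ) (a b : Fin 4) :
    Sup (Tprf a₁ a₂ a₃ ω₁ ω₂ ω₃) a 0 b = Sup (Tprf a₁ a₂ a₃ ω₁ ω₂ ω₃) b 0 a := by
  fin_cases a <;> fin_cases b <;>
    · simp [Sup, TU_eq, traceU_eq, Tprf, η, M] <;> (first | ring1 | (left; ring1) | (right; ring1) | tauto)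

theorem prf_energy_momentum_vanishes (a₁ a₂ a₃ ω₁ ω₂ ω₃ : ℝ) :
    -- (i) the torsion scalar vanishes
    torsionScalar (Tprf a₁ a₂ a₃ ω₁ ω₂ ω₃) = 0 ∧
    -- (ii) 4 Σ^{bca} T_{bc}{}^d − η^{ad} T = 0
    (∀ a d : Fin 4,
      4 * (∑ b, ∑ c, Sup (Tprf a₁ a₂ a₃ ω₁ ω₂ ω₃) b c a *
          (∑ e, η d e * Tprf a₁ a₂ a₃ ω₁ ω₂ ω₃ b c e))
        - η a d * torsionScalar (Tprf a₁ a₂ a₃ ω₁ ω₂ ω₃) = 0) ∧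
    -- (iii) Σ^{a0b} = Σ^{b0a}
    (∀ a b : Fin 4,
      Sup (Tprf a₁ a₂ a₃ ω₁ ω₂ ω₃) a 0 b = Sup (Tprf a₁ a₂ a₃ ω₁ ω₂ ω₃) b 0 a) := by
  refine ⟨scalar_zero _ _ _ _ _ _, ?_, sup_symm _ _ _ _ _ _⟩
  intro a d
  rw [scalar_zero, em_zero]
  ring

end

end Stmt0
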